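/- Let ⟨A, F⟩ be a subdirect product of a family of matrices ⟨A_i, F_i⟩ (i ∈ I) in the sense of non-indexed products: A is a subalgebra of the non-indexed product ⊗_{i∈I} A_i (whose n-ary operations are I-indexed families of n-ary terms of the respective languages, acting coordinatewise), F = A ∩ ∏_{i∈I} F_i, and all projections π_i : A → A_i are surjective. If F is nonempty, then for all tuples a, c ∈ A: (a, c) belongs to the Leibniz congruence Ω^A(F) if and only if for every i ∈ I, (a(i), c(i)) belongs to Ω^{A_i}(F_i). -/
import Mathlib


/-- An algebraic language: a family of operation symbols indexed by arity.
(Following the paper, there are no nullary symbols; constants are treated as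
unary constant operations where needed.) -/
structure Lang : Type 1 where
  ops : ℕ → Type

/-- An algebra for a language `L`. -/
structure Alg (L : Lang) : Type 1 where
  carrier : Type
  interp : ∀ {n : ℕ}, L.ops n → (Fin n → carrier) → carrier

/-- Terms of the language `L` over a type `V` of variables. -/
inductive Term (L : Lang) (V : Type) : Type
  | var : V → Term L V
  | op : ∀ {n : ℕ}, L.ops n → (Fin n → Term L V) → Term L V

/-- Evaluation of a term in an algebra under an assignment of the variables. -/
def Term.eval {L : Lang} {V : Type} (A : Alg L) (v : V → A.carrier) :
    Term L V → A.carrier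
  | .var x => v x
  | .op f ts => A.interp f (fun i => Term.eval A v (ts i))

/-- `θ` is a congruence of the algebra `A`. -/
def IsCongruence {L : Lang} (A : Alg L) (θ : A.carrier → A.carrier → Prop) : Prop :=
  Equivalence θ ∧
    ∀ (n : ℕ) (f : L.ops n) (x y : Fin n → A.carrier),
      (∀ i, θ (x i) (y i)) → θ (A.interp f x) (A.interp f y)

/-- A relation `θ` is compatible with a subset `F`: related elements are either
both in or both out of `F` (stated one-sidedly; symmetry gives the rest). -/
def Compatible {L : Lang} (A : Alg L) (F : Set A.carrier)
    (θ : A.carrier → A.carrier → Prop) : Prop :=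
  ∀ a b : A.carrier, θ a b → a ∈ F → b ∈ F

/-- `θ` is the Leibniz congruence of `F` on `A`: the largest congruence of `A`
compatible with `F`. -/
def IsLeibniz {L : Lang} (A : Alg L) (F : Set A.carrier)
    (θ : A.carrier → A.carrier → Prop) : Prop :=
  IsCongruence A θ ∧ Compatible A F θ ∧
    ∀ θ', IsCongruence A θ' → Compatible A F θ' → ∀ a b, θ' a b → θ a b

/-- The non-indexed product language of a family of languages: its `n`-ary
symbols are `I`-indexed families of `n`-ary terms of the respective languages. -/
def prodLang {ι : Type} (L : ι → Lang) : Lang where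
  ops n := ∀ i, Term (L i) (Fin n)

/-- The non-indexed product of a family of algebras: the family-of-terms
operations act coordinatewise. -/
def prodAlg {ι : Type} {L : ι → Lang} (A : ∀ i, Alg (L i)) : Alg (prodLang L) where
  carrier := ∀ i, (A i).carrier
  interp f x i := Term.eval (A i) (fun k => x k i) (f i)

/-- A subset `S` of an algebra is closed under the operations. -/
def OpClosed {L : Lang} (A : Alg L) (S : Set A.carrier) : Prop :=
  ∀ (n : ℕ) (f : L.ops n) (x : Fin n → A.carrier),
    (∀ i, x i ∈ S) → A.interp f x ∈ S

/-- The subalgebra of `A` with universe the closed subset `S`. -/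
def subAlg {L : Lang} (A : Alg L) (S : Set A.carrier) (h : OpClosed A S) :
    Alg L where
  carrier := {x // x ∈ S}
  interp f x := ⟨A.interp f (fun i => (x i).1), h _ f _ (fun i => (x i).2)⟩

/-- Term evaluation preserves any operation-compatible relation. -/
lemma eval_rel {L : Lang} {V : Type} {A : Alg L} {θ : A.carrier → A.carrier → Prop}
    (h : ∀ (n : ℕ) (f : L.ops n) (x y : Fin n → A.carrier),
      (∀ i, θ (x i) (y i)) → θ (A.interp f x) (A.interp f y))
    (t : Term L V) (u w : V → A.carrier) (hu : ∀ v, θ (u v) (w v)) :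
    θ (Term.eval A u t) (Term.eval A w t) := by
  induction t with
  | var x => exact hu x
  | op f ts ih => exact h _ f _ _ fun k => ih k

open Classical

/-- The binary "combine at coordinate i" operation of the product language. -/
noncomputable def combineOp {ι : Type} (L : ι → Lang) (i : ι) : (prodLang L).ops 2 :=
  fun j => if j = i then Term.var 0 else Term.var 1

/-- The `n+1`-ary operation acting as `f` at coordinate `i` and as the first
projection elsewhere. -/
noncomputable def coordOp {ι : Type} (L : ι → Lang) (i : ι) {n : ℕ}
    (f : (L i).ops (n+1)) : (prodLang L).ops (n+1) :=
  fun j => if h : i = j then h ▸ Term.op f (fun k => Term.var k) else Term.var 0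

section Helpers

variable {ι : Type} {L : ι → Lang} (A : ∀ i, Alg (L i))
  (S : Set (prodAlg A).carrier) (hS : OpClosed (prodAlg A) S)

/-- Combining two elements of the subalgebra at coordinate `i`. -/
noncomputable def cmb (i : ι) (a c : (subAlg (prodAlg A) S hS).carrier) :
    (subAlg (prodAlg A) S hS).carrier :=
  (subAlg (prodAlg A) S hS).interp (combineOp L i) ![a, c]

lemma cmb_coord (i j : ι) (a c : (subAlg (prodAlg A) S hS).carrier) :
    (cmb A S hS i a c).1 j = if j = i then a.1 j else c.1 j := by
  by_cases h : j = i <;>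
    simp [cmb, subAlg, prodAlg, combineOp, h, Term.eval]

lemma coordOp_coord (i : ι) {n : ℕ} (f : (L i).ops (n+1))
    (x : Fin (n+1) → (subAlg (prodAlg A) S hS).carrier) :
    ((subAlg (prodAlg A) S hS).interp (coordOp L i f) x).1 i
      = (A i).interp f (fun k => (x k).1 i) := by
  show Term.eval (A i) (fun k => (x k).1 i) (coordOp L i f i) = _
  rw [coordOp, dif_pos rfl]
  rfl

end Helpers

/-- let `⟨A, F⟩` be a subdirect product (with surjective
projections) of the matrices `⟨A i, Fi i⟩` in the sense of non-indexed
products, where `A` is the subalgebra determined by the closed set `S` and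
`F = S ∩ ∏ᵢ Fi i`.  If `F` is nonempty, then two tuples are related by the
Leibniz congruence of `F` iff their components are related by the Leibniz
congruences of the `Fi i`. -/
theorem leibniz_of_nonindexed_subdirect_product
    {ι : Type} {L : ι → Lang} (A : ∀ i, Alg (L i))
    (Fi : ∀ i, Set (A i).carrier)
    (S : Set (prodAlg A).carrier) (hS : OpClosed (prodAlg A) S)
    (hsurj : ∀ i, Function.Surjective
      (fun s : (subAlg (prodAlg A) S hS).carrier => s.1 i))
    (θ : (subAlg (prodAlg A) S hS).carrier →
         (subAlg (prodAlg A) S hS).carrier → Prop)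
    (hθ : IsLeibniz (subAlg (prodAlg A) S hS)
      {s : (subAlg (prodAlg A) S hS).carrier | ∀ i, s.1 i ∈ Fi i} θ)
    (θi : ∀ i, (A i).carrier → (A i).carrier → Prop)
    (hθi : ∀ i, IsLeibniz (A i) (Fi i) (θi i))
    (hne : ∃ s : (subAlg (prodAlg A) S hS).carrier, ∀ i, s.1 i ∈ Fi i) :
    ∀ a c : (subAlg (prodAlg A) S hS).carrier,
      θ a c ↔ ∀ i, θi i (a.1 i) (c.1 i) := by
    classical
  intro a0 c0
  have hrefl := hθ.1.1.refl
  have hcmbθ : ∀ (i : ι) (a c a' c' : (subAlg (prodAlg A) S hS).carrier),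
      θ a c → θ a' c' → θ (cmb A S hS i a a') (cmb A S hS i c c') := by
    intro i a c a' c' h1 h2
    exact hθ.1.2 2 (combineOp L i) ![a, a'] ![c, c']
      (by intro k; fin_cases k <;> simpa)
  constructor
  · -- forward direction
    intro hac i
    set ρ : (A i).carrier → (A i).carrier → Prop := fun x y =>
      ∃ a c : (subAlg (prodAlg A) S hS).carrier, θ a c ∧ a.1 i = x ∧ c.1 i = y
      with hρdef
    have hρrefl : ∀ x, ρ x x := fun x => by
      obtain ⟨a, ha⟩ := hsurj i x
      exact ⟨a, a, hrefl a, ha, ha⟩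
    have hcong : IsCongruence (A i) ρ := by
      refine ⟨⟨hρrefl, ?_, ?_⟩, ?_⟩
      · rintro x y ⟨a, c, h1, rfl, rfl⟩
        exact ⟨c, a, hθ.1.1.symm h1, rfl, rfl⟩
      · rintro x y z ⟨a, c, h1, rfl, rfl⟩ ⟨a', c', h2, he, rfl⟩
        refine ⟨cmb A S hS i a a', cmb A S hS i c' a', ?_,
          by simp [cmb_coord], by simp [cmb_coord]⟩
        have s1 : θ (cmb A S hS i a a') (cmb A S hS i c a') :=
          hcmbθ i a c a' a' h1 (hrefl a')
        have s2 : θ (cmb A S hS i a' a') (cmb A S hS i c' a') :=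
          hcmbθ i a' c' a' a' h2 (hrefl a')
        have e : cmb A S hS i c a' = cmb A S hS i a' a' :=
          Subtype.ext (funext fun j => by
            by_cases hji : j = i
            · subst hji; simp [cmb_coord, he]
            · simp [cmb_coord, hji])
        exact hθ.1.1.trans (e ▸ s1) s2
      · intro n f x y hxy
        match n, f, x, y, hxy with
        | 0, f, x, y, hxy =>
          have hxy0 : x = y := funext fun k => k.elim0
          subst hxy0
          exact hρrefl _
        | (n+1), f, x, y, hxy =>
          choose as cs h1 h2 h3 using hxy
          refine ⟨(subAlg (prodAlg A) S hS).interp (coordOp L i f) as,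
            (subAlg (prodAlg A) S hS).interp (coordOp L i f) cs,
            hθ.1.2 _ _ _ _ h1, ?_, ?_⟩
          · rw [coordOp_coord]
            congr 1
            funext k
            exact h2 k
          · rw [coordOp_coord]
            congr 1
            funext k
            exact h3 k
    have hcomp : Compatible (A i) (Fi i) ρ := by
      rintro x y ⟨a, c, h1, rfl, rfl⟩ hx
      obtain ⟨s, hs⟩ := hne
      have hθ' : θ (cmb A S hS i a s) (cmb A S hS i c s) :=
        hcmbθ i a c s s h1 (hrefl s)
      have hmem : cmb A S hS i a s ∈
          {t : (subAlg (prodAlg A) S hS).carrier | ∀ j, t.1 j ∈ Fi j} := by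
        intro j
        rw [cmb_coord]
        by_cases hji : j = i
        · subst hji; simpa using hx
        · simpa [hji] using hs j
      have hmem' := hθ.2.1 _ _ hθ' hmem i
      rw [cmb_coord] at hmem'
      simpa using hmem'
    exact (hθi i).2.2 ρ hcong hcomp _ _ ⟨a0, c0, hac, rfl, rfl⟩
  · -- backward direction
    intro h
    have hcong : IsCongruence (subAlg (prodAlg A) S hS)
        (fun a c => ∀ i, θi i (a.1 i) (c.1 i)) := by
      refine ⟨⟨fun a i => (hθi i).1.1.refl _, fun h i => (hθi i).1.1.symm (h i),
        fun h1 h2 i => (hθi i).1.1.trans (h1 i) (h2 i)⟩, ?_⟩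
      intro n f x y hxy i
      exact eval_rel (hθi i).1.2 (f i) _ _ fun k => hxy k i
    have hcomp : Compatible (subAlg (prodAlg A) S hS)
        {s : (subAlg (prodAlg A) S hS).carrier | ∀ i, s.1 i ∈ Fi i}
        (fun a c => ∀ i, θi i (a.1 i) (c.1 i)) := by
      intro a c hac ha i
      exact (hθi i).2.1 _ _ (hac i) (ha i)
    exact hθ.2.2 _ hcong hcomp a0 c0 h
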